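/- If μ > 2, then the set Λ of points of [ν − 1, ν] whose forward orbit under g never leaves [ν − 1, ν] is a Cantor set: Λ is nonempty, compact, perfect (has no isolated points), and totally disconnected; equivalently, Λ is homeomorphic to the Cantor space of infinite binary sequences. -/

import Mathlib

open Set

/-- The piecewise-linear threshold map `g(1,1,·)` of the chaotic NOR gate,
with `ν = 1/(1+μ)`. -/
noncomputable def gmap (μ : ℝ) : ℝ → ℝ := fun x =>
  let ν : ℝ := 1 / (1 + μ)
  if x ≤ ν - 1 / 2 then ν - 1 + μ * (1 + x - ν) else ν - 1 + μ * (ν - x)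

namespace CantorAux

open Filter Topology

/-- The two inverse branches of `gmap` on `[ν-1, ν]`. -/
noncomputable def brmap (μ : ℝ) (b : Bool) (y : ℝ) : ℝ :=
  if b then 1/(1+μ) - (y - (1/(1+μ) - 1))/μ else 1/(1+μ) - 1 + (y - (1/(1+μ) - 1))/μ

/-- Finite-stage approximations to the point with a given itinerary. -/
noncomputable def approx (μ : ℝ) : ℕ → (ℕ → Bool) → ℝ
  | 0, _ => 1/(1+μ) - 1
  | n+1, s => brmap μ (s 0) (approx μ n (fun k => s (k+1)))

/-- The coding map from itineraries to points. -/
noncomputable def Phi (μ : ℝ) (s : ℕ → Bool) : ℝ := limUnder atTop (fun n => approx μ n s)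

noncomputable def bitOf (μ : ℝ) (y : ℝ) : Bool := decide (1/(1+μ) - 1/2 < y)

noncomputable def itin (μ : ℝ) (x : ℝ) (n : ℕ) : Bool := bitOf μ ((gmap μ)^[n] x)

def Lam (μ : ℝ) : Set ℝ :=
  {x | ∀ n : ℕ, (gmap μ)^[n] x ∈ Icc (1/(1+μ) - 1) (1/(1+μ))}

variable {μ : ℝ}

lemma brmap_mem (hμ : 2 < μ) {b : Bool} {y : ℝ}
    (hy : y ∈ Icc (1/(1+μ)-1) (1/(1+μ))) :
    brmap μ b y ∈ Icc (1/(1+μ)-1) (1/(1+μ)) := by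
  obtain ⟨h1, h2⟩ := hy
  have hμ0 : (0:ℝ) < μ := by linarith
  have ht0 : 0 ≤ (y - (1/(1+μ) - 1))/μ := div_nonneg (by linarith) hμ0.le
  have ht1 : (y - (1/(1+μ) - 1))/μ ≤ 1/μ := by gcongr; linarith
  have h12 : 1/μ < 1/2 := by rw [div_lt_div_iff₀ hμ0 (by norm_num)]; linarith
  cases b <;> simp only [brmap, if_true, if_false, Bool.false_eq_true] <;>
    constructor <;> linarith

lemma brmap_dist (hμ : 2 < μ) (b : Bool) (x y : ℝ) :
    dist (brmap μ b x) (brmap μ b y) = dist x y / μ := by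
  have hμ0 : (0:ℝ) < μ := by linarith
  have hμ' : μ ≠ 0 := ne_of_gt hμ0
  cases b
  · simp only [brmap, if_true, if_false, Bool.false_eq_true, Real.dist_eq]
    rw [show (1/(1+μ) - 1 + (x - (1/(1+μ) - 1))/μ - (1/(1+μ) - 1 + (y - (1/(1+μ) - 1))/μ)) = (x - y)/μ from by field_simp; ring]
    rw [abs_div, abs_of_pos hμ0]
  · simp only [brmap, if_true, Real.dist_eq]
    rw [show (1/(1+μ) - (x - (1/(1+μ) - 1))/μ - (1/(1+μ) - (y - (1/(1+μ) - 1))/μ)) = (y - x)/μ from by field_simp; ring]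
    rw [abs_div, abs_of_pos hμ0, abs_sub_comm]

lemma approx_mem (hμ : 2 < μ) : ∀ (n : ℕ) (s : ℕ → Bool),
    approx μ n s ∈ Icc (1/(1+μ)-1) (1/(1+μ)) := by
  intro n
  induction n with
  | zero => intro s; simp only [approx]; exact ⟨le_refl _, by linarith⟩
  | succ n ih => intro s; exact brmap_mem hμ (ih _)

lemma dist_approx (hμ : 2 < μ) : ∀ (n : ℕ) (s : ℕ → Bool),
    dist (approx μ n s) (approx μ (n+1) s) ≤ 1 * (1/μ)^n := by
  intro n
  induction n with
  | zero =>
    intro s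
    have h := Real.dist_le_of_mem_Icc (approx_mem hμ 0 s) (approx_mem hμ 1 s)
    simpa using h
  | succ n ih =>
    intro s
    have : dist (approx μ (n+1) s) (approx μ (n+2) s)
        = dist (approx μ n (fun k => s (k+1))) (approx μ (n+1) (fun k => s (k+1))) / μ := by
      simp only [approx]
      exact brmap_dist hμ _ _ _
    rw [this]
    have hμ0 : (0:ℝ) < μ := by linarith
    have := ih (fun k => s (k+1))
    rw [div_le_iff₀ hμ0]
    calc dist (approx μ n fun k => s (k+1)) (approx μ (n+1) fun k => s (k+1))
        ≤ 1 * (1/μ)^n := this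
      _ = 1 * (1/μ)^(n+1) * μ := by simp only [one_mul]; rw [pow_succ, mul_assoc, one_div_mul_cancel hμ0.ne', mul_one]
  
lemma cauchy_approx (hμ : 2 < μ) (s : ℕ → Bool) : CauchySeq (fun n => approx μ n s) := by
  have hr : 1/μ < 1 := by rw [div_lt_one (by linarith)]; linarith
  exact cauchySeq_of_le_geometric (1/μ) 1 hr (fun n => dist_approx hμ n s)

lemma tendsto_Phi (hμ : 2 < μ) (s : ℕ → Bool) :
    Tendsto (fun n => approx μ n s) atTop (𝓝 (Phi μ s)) :=
  (cauchy_approx hμ s).tendsto_limUnder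

lemma Phi_mem (hμ : 2 < μ) (s : ℕ → Bool) :
    Phi μ s ∈ Icc (1/(1+μ)-1) (1/(1+μ)) :=
  isClosed_Icc.mem_of_tendsto (tendsto_Phi hμ s)
    (Eventually.of_forall (fun n => approx_mem hμ n s))

lemma continuous_brmap (b : Bool) : Continuous (brmap μ b) := by
  unfold brmap
  cases b <;> simp only [if_true, if_false, Bool.false_eq_true] <;> fun_prop

lemma Phi_eq (hμ : 2 < μ) (s : ℕ → Bool) :
    Phi μ s = brmap μ (s 0) (Phi μ (fun k => s (k+1))) := by
  have h1 : Tendsto (fun n => approx μ (n+1) s) atTop (𝓝 (Phi μ s)) :=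
    (tendsto_Phi hμ s).comp (tendsto_add_atTop_nat 1)
  have h2 : Tendsto (fun n => approx μ (n+1) s) atTop
      (𝓝 (brmap μ (s 0) (Phi μ (fun k => s (k+1))))) := by
    simp only [approx]
    exact ((continuous_brmap (s 0)).tendsto _).comp (tendsto_Phi hμ _)
  exact tendsto_nhds_unique h1 h2

lemma dist_Phi_le (hμ : 2 < μ) : ∀ (n : ℕ) (s s' : ℕ → Bool),
    (∀ i < n, s i = s' i) → dist (Phi μ s) (Phi μ s') ≤ (1/μ)^n := by
  intro n
  induction n with
  | zero =>
    intro s s' _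
    have h := Real.dist_le_of_mem_Icc (Phi_mem hμ s) (Phi_mem hμ s')
    simpa using h
  | succ n ih =>
    intro s s' h
    rw [Phi_eq hμ s, Phi_eq hμ s', h 0 (Nat.succ_pos n), brmap_dist hμ]
    have hμ0 : (0:ℝ) < μ := by linarith
    have := ih (fun k => s (k+1)) (fun k => s' (k+1)) (fun i hi => h (i+1) (by omega))
    rw [div_le_iff₀ hμ0]
    calc dist (Phi μ fun k => s (k+1)) (Phi μ fun k => s' (k+1))
        ≤ (1/μ)^n := this
      _ = (1/μ)^(n+1) * μ := by rw [pow_succ, mul_assoc, one_div_mul_cancel hμ0.ne', mul_one]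

lemma gmap_brmap (hμ : 2 < μ) {y : ℝ} (hy : y ∈ Icc (1/(1+μ)-1) (1/(1+μ))) (b : Bool) :
    gmap μ (brmap μ b y) = y := by
  obtain ⟨h1, h2⟩ := hy
  have hμ0 : (0:ℝ) < μ := by linarith
  have h1μ : (0:ℝ) < 1 + μ := by linarith
  have ht0 : 0 ≤ (y - (1/(1+μ) - 1))/μ := div_nonneg (by linarith) hμ0.le
  have ht1 : (y - (1/(1+μ) - 1))/μ ≤ 1/μ := by gcongr; linarith
  have h12 : 1/μ < 1/2 := by rw [div_lt_div_iff₀ hμ0 (by norm_num)]; linarith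
  cases b
  · have hc : brmap μ false y ≤ 1/(1+μ) - 1/2 := by
      simp only [brmap, if_false, Bool.false_eq_true]
      linarith
    simp only [gmap, brmap, if_false, Bool.false_eq_true] at hc ⊢
    rw [if_pos hc]
    field_simp
    ring
  · have hc : ¬ (brmap μ true y ≤ 1/(1+μ) - 1/2) := by
      simp only [brmap, if_true]
      push_neg
      linarith
    simp only [gmap, brmap, if_true] at hc ⊢
    rw [if_neg hc]
    field_simp
    ring

lemma bitOf_brmap (hμ : 2 < μ) {y : ℝ} (hy : y ∈ Icc (1/(1+μ)-1) (1/(1+μ))) (b : Bool) :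
    bitOf μ (brmap μ b y) = b := by
  obtain ⟨h1, h2⟩ := hy
  have hμ0 : (0:ℝ) < μ := by linarith
  have ht0 : 0 ≤ (y - (1/(1+μ) - 1))/μ := div_nonneg (by linarith) hμ0.le
  have ht1 : (y - (1/(1+μ) - 1))/μ ≤ 1/μ := by gcongr; linarith
  have h12 : 1/μ < 1/2 := by rw [div_lt_div_iff₀ hμ0 (by norm_num)]; linarith
  cases b
  · simp only [bitOf, brmap, if_false, Bool.false_eq_true, decide_eq_false_iff_not, not_lt]
    linarith
  · simp only [bitOf, brmap, if_true, decide_eq_true_eq]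
    linarith

lemma brmap_bitOf_gmap (hμ : 2 < μ) (y : ℝ) :
    brmap μ (bitOf μ y) (gmap μ y) = y := by
  have hμ0 : (0:ℝ) < μ := by linarith
  have h1μ : (0:ℝ) < 1 + μ := by linarith
  by_cases h : y ≤ 1/(1+μ) - 1/2
  · have hb : bitOf μ y = false := by
      simp only [bitOf, decide_eq_false_iff_not, not_lt]; exact h
    rw [hb]
    simp only [gmap, brmap, if_false, Bool.false_eq_true]
    rw [if_pos h]
    field_simp
    ring
  · have hb : bitOf μ y = true := by
      simp only [bitOf, decide_eq_true_eq]; exact lt_of_not_ge h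
    rw [hb]
    simp only [gmap, brmap, if_true]
    rw [if_neg h]
    field_simp
    ring

lemma Lam_subset_Icc (x : ℝ) (hx : x ∈ Lam μ) : x ∈ Icc (1/(1+μ)-1) (1/(1+μ)) := by
  simpa using hx 0

lemma gmap_mem_Lam {x : ℝ} (hx : x ∈ Lam μ) : gmap μ x ∈ Lam μ := by
  intro n
  have := hx (n+1)
  rwa [Function.iterate_succ_apply] at this

lemma iterate_mem_Lam {x : ℝ} (hx : x ∈ Lam μ) (n : ℕ) : (gmap μ)^[n] x ∈ Lam μ := by
  induction n with
  | zero => simpa using hx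
  | succ n ih =>
    rw [Function.iterate_succ_apply']
    exact gmap_mem_Lam ih

lemma gmap_Phi (hμ : 2 < μ) (s : ℕ → Bool) :
    gmap μ (Phi μ s) = Phi μ (fun k => s (k+1)) := by
  rw [Phi_eq hμ s]
  exact gmap_brmap hμ (Phi_mem hμ _) _

lemma iterate_gmap_Phi (hμ : 2 < μ) : ∀ (n : ℕ) (s : ℕ → Bool),
    (gmap μ)^[n] (Phi μ s) = Phi μ (fun k => s (k+n)) := by
  intro n
  induction n with
  | zero => intro s; simp
  | succ n ih =>
    intro s
    calc (gmap μ)^[n+1] (Phi μ s)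
        = (gmap μ)^[n] (Phi μ fun k => s (k+1)) := by
          rw [Function.iterate_succ_apply, gmap_Phi hμ]
      _ = Phi μ (fun k => s (k+n+1)) := ih _
      _ = Phi μ (fun k => s (k+(n+1))) := by simp only [Nat.add_assoc]

lemma Phi_mem_Lam (hμ : 2 < μ) (s : ℕ → Bool) : Phi μ s ∈ Lam μ := by
  intro n
  rw [iterate_gmap_Phi hμ]
  exact Phi_mem hμ _

lemma itin_Phi (hμ : 2 < μ) (s : ℕ → Bool) : itin μ (Phi μ s) = s := by
  funext n
  show bitOf μ ((gmap μ)^[n] (Phi μ s)) = s n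
  rw [iterate_gmap_Phi hμ, Phi_eq hμ]
  simpa using bitOf_brmap hμ (Phi_mem hμ _) (s n)

lemma itin_gmap (x : ℝ) : itin μ (gmap μ x) = fun k => itin μ x (k+1) := by
  funext k
  show bitOf μ ((gmap μ)^[k] (gmap μ x)) = bitOf μ ((gmap μ)^[k+1] x)
  rw [Function.iterate_succ_apply]

lemma Phi_itin (hμ : 2 < μ) {x : ℝ} (hx : x ∈ Lam μ) : Phi μ (itin μ x) = x := by
  have hμ0 : (0:ℝ) < μ := by linarith
  have key : ∀ (n : ℕ) (x : ℝ), x ∈ Lam μ → dist (Phi μ (itin μ x)) x ≤ (1/μ)^n := by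
    intro n
    induction n with
    | zero =>
      intro x hx
      have h := Real.dist_le_of_mem_Icc (Phi_mem hμ (itin μ x)) (Lam_subset_Icc x hx)
      simpa using h
    | succ n ih =>
      intro x hx
      have h1 : Phi μ (itin μ x) = brmap μ (bitOf μ x) (Phi μ (itin μ (gmap μ x))) := by
        rw [Phi_eq hμ, itin_gmap]
        rfl
      have h2 : x = brmap μ (bitOf μ x) (gmap μ x) := (brmap_bitOf_gmap hμ x).symm
      rw [h1]
      nth_rewrite 3 [h2]
      rw [brmap_dist hμ]
      have := ih (gmap μ x) (gmap_mem_Lam hx)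
      rw [div_le_iff₀ hμ0]
      calc dist (Phi μ (itin μ (gmap μ x))) (gmap μ x) ≤ (1/μ)^n := this
        _ = (1/μ)^(n+1) * μ := by rw [pow_succ, mul_assoc, one_div_mul_cancel hμ0.ne', mul_one]
  have h0 : Tendsto (fun n : ℕ => (1/μ:ℝ)^n) atTop (𝓝 0) := by
    apply tendsto_pow_atTop_nhds_zero_of_lt_one (by positivity)
    rw [div_lt_one hμ0]; linarith
  have hle : dist (Phi μ (itin μ x)) x ≤ 0 :=
    ge_of_tendsto h0 (Eventually.of_forall (fun n => key n x hx))
  rw [← dist_le_zero]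
  exact hle

lemma Lam_eq_range (hμ : 2 < μ) : Lam μ = Set.range (Phi μ) := by
  ext x
  constructor
  · intro hx; exact ⟨itin μ x, Phi_itin hμ hx⟩
  · rintro ⟨s, rfl⟩; exact Phi_mem_Lam hμ s

lemma continuous_Phi (hμ : 2 < μ) : Continuous (Phi μ) := by
  have hμ0 : (0:ℝ) < μ := by linarith
  have hr : (1:ℝ)/μ < 1 := by rw [div_lt_one hμ0]; linarith
  rw [continuous_iff_continuousAt]
  intro s
  rw [ContinuousAt, Metric.tendsto_nhds]
  intro ε hε
  obtain ⟨n, hn⟩ := exists_pow_lt_of_lt_one hε hr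
  have hV : {s' : ℕ → Bool | ∀ i < n, s' i = s i} ∈ 𝓝 s := by
    have heq : {s' : ℕ → Bool | ∀ i < n, s' i = s i}
        = ⋂ i ∈ Finset.range n, {s' : ℕ → Bool | s' i = s i} := by
      ext s'; simp [Finset.mem_range]
    rw [heq]
    refine (Filter.biInter_finset_mem _).mpr (fun i _ => ?_)
    have hopen : IsOpen {s' : ℕ → Bool | s' i = s i} := by
      have he : {s' : ℕ → Bool | s' i = s i} = (fun s' : ℕ → Bool => s' i) ⁻¹' {s i} := rfl
      rw [he]
      exact (isOpen_discrete _).preimage (continuous_apply i)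
    exact hopen.mem_nhds rfl
  refine Filter.mem_of_superset hV (fun s' hs' => ?_)
  exact lt_of_le_of_lt (dist_Phi_le hμ n s' s hs') hn

lemma continuous_gmap : Continuous (gmap μ) := by
  show Continuous fun x : ℝ => if x ≤ 1/(1+μ) - 1/2 then 1/(1+μ) - 1 + μ*(1+x-1/(1+μ))
    else 1/(1+μ) - 1 + μ*(1/(1+μ) - x)
  apply Continuous.if_le (by fun_prop) (by fun_prop) continuous_id continuous_const
  intro x hx
  rw [show x = 1/(1+μ) - 1/2 from hx]
  ring

lemma half_not_mem_Lam (hμ : 2 < μ) : (1/(1+μ) - 1/2) ∉ Lam μ := by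
  intro h
  have h1 := h 1
  rw [Function.iterate_one] at h1
  simp only [gmap, mem_Icc] at h1
  rw [if_pos (le_refl _)] at h1
  have h2 := h1.2
  have h1μ : (0:ℝ) < 1 + μ := by linarith
  nlinarith [h2]

end CantorAux

open CantorAux Filter

/-- For `μ > 2`, the set of points of `[ν − 1, ν]` whose forward orbit under `g`
never leaves `[ν − 1, ν]` is a Cantor set: nonempty, compact, perfect, totally
disconnected, and homeomorphic to the Cantor space of binary sequences. -/
theorem gmap_invariant_set_is_cantor (μ : ℝ) (hμ : 2 < μ) (ν : ℝ) (hν : ν = 1 / (1 + μ))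
    (Λ : Set ℝ) (hΛ : Λ = {x ∈ Icc (ν - 1) ν | ∀ n : ℕ, (gmap μ)^[n] x ∈ Icc (ν - 1) ν}) :
    Λ.Nonempty ∧ IsCompact Λ ∧ Perfect Λ ∧ IsTotallyDisconnected Λ ∧
      Nonempty (Λ ≃ₜ (ℕ → Bool)) := by
  subst hν
  have hΛ' : Λ = Lam μ := by
    rw [hΛ]
    ext x
    simp only [Lam, mem_setOf_eq, mem_sep_iff]
    constructor
    · rintro ⟨_, h⟩; exact h
    · intro h; exact ⟨by simpa using h 0, h⟩
  subst hΛ'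
  have hμ0 : (0:ℝ) < μ := by linarith
  have hr : (1:ℝ)/μ < 1 := by rw [div_lt_one hμ0]; linarith
  have hcontPhi : Continuous (Phi μ) := continuous_Phi hμ
  have hrange : Lam μ = Set.range (Phi μ) := Lam_eq_range hμ
  have hcompact : IsCompact (Lam μ) := by
    rw [hrange]; exact isCompact_range hcontPhi
  have hclosed : IsClosed (Lam μ) := hcompact.isClosed
  let e : (ℕ → Bool) ≃ (Lam μ) :=
    { toFun := fun s => ⟨Phi μ s, Phi_mem_Lam hμ s⟩
      invFun := fun x => itin μ x.1
      left_inv := fun s => itin_Phi hμ s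
      right_inv := fun x => Subtype.ext (Phi_itin hμ x.2) }
  have hecont : Continuous e := hcontPhi.subtype_mk _
  let h : (ℕ → Bool) ≃ₜ (Lam μ) := hecont.homeoOfEquivCompactToT2
  refine ⟨⟨Phi μ (fun _ => false), Phi_mem_Lam hμ _⟩, hcompact, ?_, ?_, ⟨h.symm⟩⟩
  · -- Perfect
    refine ⟨hclosed, ?_⟩
    rw [preperfect_iff_nhds]
    intro x hx U hU
    obtain ⟨ε, hε, hball⟩ := Metric.mem_nhds_iff.mp hU
    obtain ⟨n, hn⟩ := exists_pow_lt_of_lt_one hε hr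
    set s : ℕ → Bool := itin μ x with hs
    set s' : ℕ → Bool := Function.update s n (!(s n)) with hs'
    refine ⟨Phi μ s', ⟨?_, Phi_mem_Lam hμ s'⟩, ?_⟩
    · apply hball
      rw [Metric.mem_ball]
      refine lt_of_le_of_lt ?_ hn
      have hx' : Phi μ s = x := Phi_itin hμ hx
      rw [← hx']
      exact dist_Phi_le hμ n s' s (fun i hi => Function.update_of_ne (by omega) _ _)
    · intro hPhi
      have heq : s' = s := by
        have h1 : itin μ (Phi μ s') = s' := itin_Phi hμ s'
        rw [hPhi] at h1
        rw [← h1, hs]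
      have h2 := congrFun heq n
      rw [hs', Function.update_self] at h2
      simp at h2
  · -- totally disconnected
    intro t htsub ht x hx y hy
    by_contra hxy
    have hxL := htsub hx
    have hyL := htsub hy
    have hne : itin μ x ≠ itin μ y := fun h =>
      hxy (by rw [← Phi_itin hμ hxL, h, Phi_itin hμ hyL])
    obtain ⟨n, hn⟩ : ∃ n, itin μ x n ≠ itin μ y n := by
      by_contra hc; push_neg at hc; exact hne (funext hc)
    have hcont : Continuous ((gmap μ)^[n]) := (continuous_gmap (μ := μ)).iterate n
    have hne_c : ∀ z ∈ Lam μ, (gmap μ)^[n] z ≠ (1/(1+μ) - 1/2 : ℝ) := fun z hz hzc =>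
      half_not_mem_Lam hμ (hzc ▸ iterate_mem_Lam hz n)
    have hsub : t ⊆ (gmap μ)^[n] ⁻¹' (Iio (1/(1+μ) - 1/2))
        ∪ (gmap μ)^[n] ⁻¹' (Ioi (1/(1+μ) - 1/2)) := by
      intro z hz
      rcases lt_or_gt_of_ne (hne_c z (htsub hz)) with hlt | hgt
      · exact Or.inl hlt
      · exact Or.inr hgt
    have hPQ : ¬ ((1/(1+μ) - 1/2 : ℝ) < (gmap μ)^[n] x ↔ (1/(1+μ) - 1/2 : ℝ) < (gmap μ)^[n] y) := by
      intro hiff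
      apply hn
      show bitOf μ _ = bitOf μ _
      simp only [bitOf, decide_eq_decide]
      exact hiff
    have hu : IsOpen ((gmap μ)^[n] ⁻¹' (Iio (1/(1+μ) - 1/2))) := isOpen_Iio.preimage hcont
    have hv : IsOpen ((gmap μ)^[n] ⁻¹' (Ioi (1/(1+μ) - 1/2))) := isOpen_Ioi.preimage hcont
    by_cases hA : (1/(1+μ) - 1/2 : ℝ) < (gmap μ)^[n] x
    · have hB : (gmap μ)^[n] y < 1/(1+μ) - 1/2 := by
        rcases lt_or_gt_of_ne (hne_c y hyL) with hlt | hgt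
        · exact hlt
        · exact absurd (iff_of_true hA hgt) hPQ
      obtain ⟨z, hzt, hzu, hzv⟩ := ht _ _ hu hv hsub ⟨y, hy, hB⟩ ⟨x, hx, hA⟩
      simp only [mem_preimage, mem_Iio, mem_Ioi] at hzu hzv
      linarith
    · have hA' : (gmap μ)^[n] x < 1/(1+μ) - 1/2 :=
        lt_of_le_of_ne (not_lt.mp hA) (hne_c x hxL)
      have hB : (1/(1+μ) - 1/2 : ℝ) < (gmap μ)^[n] y := by
        rcases lt_or_gt_of_ne (hne_c y hyL) with hlt | hgt
        · exact absurd (iff_of_false hA (not_lt.mpr hlt.le)) hPQ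
        · exact hgt
      obtain ⟨z, hzt, hzu, hzv⟩ := ht _ _ hu hv hsub ⟨x, hx, hA'⟩ ⟨y, hy, hB⟩
      simp only [mem_preimage, mem_Iio, mem_Ioi] at hzu hzv
      linarith
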